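/- Let C be an (n,2) code whose columns all lie in {[0001],[0011],[0101],[0110]} (transposed), with |1| = 1 (exactly one column of type [0001]) and with |3|, |5|, |6| of the same parity where |3| ≤ |5| ≤ |6| (Class-I with |1| = 1). Let C' be obtained by replacing the unique [0001] column with a [0011] column. Then λ_{C'} ≥ λ_C for every BSC crossover probability ε ∈ (0,1/2), and C' is linear. -/

import Mathlib

open Finset

/-- Minimum Hamming distance from `y` to the 4 rows (codewords) of `C`. -/
def dmin {m : ℕ} (C : Fin 4 → Fin m → ZMod 2) (y : Fin m → ZMod 2) : ℕ :=
  Finset.univ.inf' ⟨0, Finset.mem_univ 0⟩ (fun i => hammingDist (C i) y)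

/-- Number of outputs at min-distance `d` from the code `C`. -/
def alpha {m : ℕ} (C : Fin 4 → Fin m → ZMod 2) (d : ℕ) : ℕ :=
  (Finset.univ.filter (fun y : Fin m → ZMod 2 => dmin C y = d)).card

/-- Average ML correct decoding probability of `C` on a BSC with crossover `ε`. -/
noncomputable def lam {m : ℕ} (C : Fin 4 → Fin m → ZMod 2) (ε : ℝ) : ℝ :=
  (1/4) * ∑ d ∈ Finset.range (m+1), (alpha C d : ℝ) * (1-ε)^(m-d) * ε^d

/-- The column pattern (in `{0,1}^4`) associated with the integer `i`,
row 1 being the most significant bit. -/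
def pat (i : ℕ) : Fin 4 → ZMod 2 := fun j => if Nat.testBit i (3 - (j : ℕ)) then 1 else 0

/-- Number of columns of `C` equal to the pattern `p`. -/
def colCount {m : ℕ} (C : Fin 4 → Fin m → ZMod 2) (p : Fin 4 → ZMod 2) : ℕ :=
  (Finset.univ.filter (fun k : Fin m => (fun i => C i k) = p)).card

/-- A code is linear if its set of codewords is a subgroup of `({0,1}^n, ⊕)`. -/
def IsLinearCode {m : ℕ} (C : Fin 4 → Fin m → ZMod 2) : Prop :=
  ∃ H : AddSubgroup (Fin m → ZMod 2), Set.range C = (H : Set (Fin m → ZMod 2))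

/-- `w_i(y)`: number of positions with column pattern `i` where `y` is 1. -/
def wcount {m : ℕ} (C : Fin 4 → Fin m → ZMod 2) (i : ℕ) (y : Fin m → ZMod 2) : ℕ :=
  (Finset.univ.filter (fun k : Fin m => (fun r => C r k) = pat i ∧ y k = 1)).card


private lemma cross_mul (x y δ : ℕ) (h : x ≤ y) : x * (y + δ) ≤ y * (x + δ) := by nlinarith

private lemma fact_expand (A B : ℕ) (h : A = B + 1) : A.factorial = A * B.factorial := by
  subst h; rfl

private lemma fact_ineq : ∀ (k u v δ : ℕ), u ≤ v →
    (u+k).factorial * v.factorial * (u+δ).factorial * (v+k+δ).factorial ≤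
    u.factorial * (v+k).factorial * ((u+k)+δ).factorial * (v+δ).factorial := by
  intro k
  induction k using Nat.strong_induction_on with
  | _ k IH =>
    match k with
    | 0 => intro u v δ h; simp [mul_comm, mul_assoc, mul_left_comm]
    | 1 =>
      intro u v δ h
      have G2 : (v+1).factorial = (v+1) * v.factorial := fact_expand _ _ (by ring)
      have G3 : (u+1+δ).factorial = (u+1+δ) * (u+δ).factorial := fact_expand _ _ (by ring)
      have G5 : (u+1).factorial = (u+1) * u.factorial := fact_expand _ _ (by ring)
      have G8 : (v+1+δ).factorial = (v+1+δ) * (v+δ).factorial := fact_expand _ _ (by ring)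
      have key : (u+1) * (v+1+δ) ≤ (v+1) * (u+1+δ) := cross_mul _ _ _ (by omega)
      calc (u+1).factorial * v.factorial * (u+δ).factorial * (v+1+δ).factorial
          = ((u+1) * (v+1+δ)) * (u.factorial * v.factorial * (u+δ).factorial * (v+δ).factorial) := by
            rw [G5, G8]; ring
        _ ≤ ((v+1) * (u+1+δ)) * (u.factorial * v.factorial * (u+δ).factorial * (v+δ).factorial) :=
            Nat.mul_le_mul_right _ key
        _ = u.factorial * (v+1).factorial * ((u+1)+δ).factorial * (v+δ).factorial := by
            rw [G2, G3]; ring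
    | (k+2) =>
      intro u v δ h
      have hIH := IH k (by omega) (u+1) (v+1) δ (by omega)
      have G1 : (u+(k+2)).factorial = (u+k+2) * (u+1+k).factorial := fact_expand _ _ (by ring)
      have G2 : (v+1).factorial = (v+1) * v.factorial := fact_expand _ _ (by ring)
      have G3 : (u+1+δ).factorial = (u+1+δ) * (u+δ).factorial := fact_expand _ _ (by ring)
      have G4 : (v+(k+2)+δ).factorial = (v+k+2+δ) * (v+1+k+δ).factorial := fact_expand _ _ (by ring)
      have G5 : (u+1).factorial = (u+1) * u.factorial := fact_expand _ _ (by ring)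
      have G6 : (v+(k+2)).factorial = (v+k+2) * (v+1+k).factorial := fact_expand _ _ (by ring)
      have G7 : ((u+(k+2))+δ).factorial = (u+k+2+δ) * (u+1+k+δ).factorial := fact_expand _ _ (by ring)
      have G8 : (v+1+δ).factorial = (v+1+δ) * (v+δ).factorial := fact_expand _ _ (by ring)
      have key : (u+1)*(v+1+δ)*((u+k+2)*(v+k+2+δ)) ≤ (v+1)*(u+1+δ)*((v+k+2)*(u+k+2+δ)) :=
        Nat.mul_le_mul (cross_mul (u+1) (v+1) δ (by omega)) (cross_mul (u+k+2) (v+k+2) δ (by omega))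
      refine Nat.le_of_mul_le_mul_right ?_ (show 0 < (v+1)*(u+1+δ) by positivity)
      calc (u+(k+2)).factorial * v.factorial * (u+δ).factorial * (v+(k+2)+δ).factorial * ((v+1)*(u+1+δ))
          = ((u+1+k).factorial * (v+1).factorial * (u+1+δ).factorial * (v+1+k+δ).factorial) * ((u+k+2)*(v+k+2+δ)) := by
            rw [G1, G2, G3, G4]; ring
        _ ≤ ((u+1).factorial * (v+1+k).factorial * (u+1+k+δ).factorial * (v+1+δ).factorial) * ((u+k+2)*(v+k+2+δ)) :=
            Nat.mul_le_mul_right _ hIH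
        _ = (u.factorial * (v+1+k).factorial * (u+1+k+δ).factorial * (v+δ).factorial) * ((u+1)*(v+1+δ)*((u+k+2)*(v+k+2+δ))) := by
            rw [G5, G8]; ring
        _ ≤ (u.factorial * (v+1+k).factorial * (u+1+k+δ).factorial * (v+δ).factorial) * ((v+1)*(u+1+δ)*((v+k+2)*(u+k+2+δ))) :=
            Nat.mul_le_mul_left _ key
        _ = u.factorial * (v+(k+2)).factorial * ((u+(k+2))+δ).factorial * (v+δ).factorial * ((v+1)*(u+1+δ)) := by
            rw [G6, G7]; ring

private lemma choose_ineq (a δ u p : ℕ) (hup : u ≤ p) (hpa : u + p ≤ a) :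
    a.choose u * (a+2*δ).choose (p+δ) ≤ a.choose p * (a+2*δ).choose (u+δ) := by
  have e1 := Nat.choose_mul_factorial_mul_factorial (show u ≤ a by omega)
  have e2 := Nat.choose_mul_factorial_mul_factorial (show p+δ ≤ a+2*δ by omega)
  have e3 := Nat.choose_mul_factorial_mul_factorial (show p ≤ a by omega)
  have e4 := Nat.choose_mul_factorial_mul_factorial (show u+δ ≤ a+2*δ by omega)
  rw [show a+2*δ-(p+δ) = (a-p)+δ by omega] at e2
  rw [show a+2*δ-(u+δ) = (a-u)+δ by omega] at e4
  have F := fact_ineq (p-u) u (a-p) δ (by omega)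
  rw [show u+(p-u) = p by omega, show a-p+(p-u) = a-u by omega] at F
  refine Nat.le_of_mul_le_mul_right ?_
    (show 0 < u.factorial*(a-u).factorial*(u+δ).factorial*((a-u)+δ).factorial*
      (p.factorial*(a-p).factorial*(p+δ).factorial*((a-p)+δ).factorial) by positivity)
  calc a.choose u * (a+2*δ).choose (p+δ) *
        (u.factorial*(a-u).factorial*(u+δ).factorial*((a-u)+δ).factorial*
         (p.factorial*(a-p).factorial*(p+δ).factorial*((a-p)+δ).factorial))
      = a.factorial * (a+2*δ).factorial *
        (p.factorial * (a-p).factorial * (u+δ).factorial * ((a-u)+δ).factorial) := by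
        rw [← e1, ← e2]; ring
    _ ≤ a.factorial * (a+2*δ).factorial *
        (u.factorial * (a-u).factorial * (p+δ).factorial * ((a-p)+δ).factorial) :=
        Nat.mul_le_mul_left _ F
    _ = a.choose p * (a+2*δ).choose (u+δ) *
        (u.factorial*(a-u).factorial*(u+δ).factorial*((a-u)+δ).factorial*
         (p.factorial*(a-p).factorial*(p+δ).factorial*((a-p)+δ).factorial)) := by
        rw [← e3, ← e4]; ring

private lemma zmod2_em (x : ZMod 2) : x = 0 ∨ x = 1 := by revert x; decide

private lemma card_weight (α : Type*) [Fintype α] [DecidableEq α] (m : ℕ) :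
    (univ.filter fun h : α → ZMod 2 => (univ.filter fun x => h x = 1).card = m).card
      = (Fintype.card α).choose m := by
  rw [← Finset.card_univ, ← Finset.card_powersetCard]
  refine Finset.card_bij' (fun h _ => univ.filter fun x => h x = 1)
      (fun S _ x => if x ∈ S then 1 else 0) ?_ ?_ ?_ ?_
  · intro h hh
    rw [Finset.mem_powersetCard]
    exact ⟨Finset.filter_subset _ _, (mem_filter.1 hh).2⟩
  · intro S hS
    rw [Finset.mem_powersetCard] at hS
    simp only [mem_filter, mem_univ, true_and]
    rw [← hS.2]; congr 1; ext x
    simp only [mem_filter, mem_univ, true_and]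
    by_cases hx : x ∈ S <;> simp [hx]
  · intro h _; funext x
    rcases zmod2_em (h x) with h0 | h1
    · simp [mem_filter, h0]
    · simp [mem_filter, h1]
  · intro S _; ext x
    simp only [mem_filter, mem_univ, true_and]
    by_cases hx : x ∈ S <;> simp [hx]

section prof
variable {N : ℕ} (κ : Fin N → Fin 4)

private def prof (y : Fin N → ZMod 2) : Fin 4 → ℕ :=
  fun i => (univ.filter fun k => κ k = i ∧ y k = 1).card

private lemma prof_sub (y : Fin N → ZMod 2) (i : Fin 4) :
    (univ.filter fun k : {k : Fin N // κ k = i} => y k.1 = 1).card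
      = (univ.filter fun k => κ k = i ∧ y k = 1).card := by
  refine Finset.card_bij' (fun k _ => k.1) (fun k hk => ⟨k, (mem_filter.1 hk).2.1⟩) ?_ ?_ ?_ ?_
  · intro kk hk
    exact mem_filter.2 ⟨mem_univ _, kk.2, (mem_filter.1 hk).2⟩
  · intro k hk
    exact mem_filter.2 ⟨mem_univ _, (mem_filter.1 hk).2.2⟩
  · intro kk _; rfl
  · intro k _; rfl

private lemma Gval (g : ∀ i : Fin 4, {k : Fin N // κ k = i} → ZMod 2) (i : Fin 4)
    (x : {k : Fin N // κ k = i}) : g (κ x.1) ⟨x.1, rfl⟩ = g i x := by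
  obtain ⟨k, hk⟩ := x; subst hk; rfl

private lemma card_profile (m : Fin 4 → ℕ) :
    (univ.filter fun y : Fin N → ZMod 2 => prof κ y = m).card
      = ∏ i : Fin 4, ((univ.filter fun k => κ k = i).card).choose (m i) := by
  classical
  calc (univ.filter fun y : Fin N → ZMod 2 => prof κ y = m).card
      = (Fintype.piFinset (fun i : Fin 4 =>
          (univ.filter fun h : {k : Fin N // κ k = i} → ZMod 2 =>
            (univ.filter fun x => h x = 1).card = m i))).card := by
        refine Finset.card_bij' (fun y _ => fun i (k : {k : Fin N // κ k = i}) => y k.1)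
          (fun g _ => fun k => g (κ k) ⟨k, rfl⟩) ?_ ?_ ?_ ?_
        · intro y hy
          rw [Fintype.mem_piFinset]
          intro i
          rw [mem_filter]
          refine ⟨mem_univ _, ?_⟩
          rw [prof_sub]
          exact congrFun (mem_filter.1 hy).2 i
        · intro g hg
          rw [Fintype.mem_piFinset] at hg
          rw [mem_filter]
          refine ⟨mem_univ _, ?_⟩
          funext i
          have h1 := (mem_filter.1 (hg i)).2
          calc prof κ (fun k => g (κ k) ⟨k, rfl⟩) i
              = (univ.filter fun x : {k : Fin N // κ k = i} =>
                  g (κ x.1) ⟨x.1, rfl⟩ = 1).card := (prof_sub κ _ i).symm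
            _ = (univ.filter fun x : {k : Fin N // κ k = i} => g i x = 1).card := by
                congr 1; ext x; simp only [mem_filter, mem_univ, true_and]
                rw [Gval κ g i x]
            _ = m i := h1
        · intro y _; rfl
        · intro g _
          funext i x
          exact Gval κ g i x
    _ = ∏ i : Fin 4, ((univ.filter fun h : {k : Fin N // κ k = i} → ZMod 2 =>
          (univ.filter fun x => h x = 1).card = m i)).card := Fintype.card_piFinset _
    _ = ∏ i : Fin 4, ((univ.filter fun k => κ k = i).card).choose (m i) := by
        refine Finset.prod_congr rfl fun i _ => ?_
        rw [card_weight, Fintype.card_subtype]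

end prof

private lemma card_filter_prof {N : ℕ} (κ : Fin N → Fin 4) (Q : (Fin N → ZMod 2) → Prop)
    [DecidablePred Q] (P : (Fin 4 → ℕ) → Prop) [DecidablePred P]
    (hQP : ∀ y, Q y ↔ P (prof κ y)) :
    (univ.filter Q).card
      = ∑ mm ∈ (Fintype.piFinset (fun i : Fin 4 =>
          Finset.range ((univ.filter fun k => κ k = i).card + 1))).filter P,
          ∏ i : Fin 4, ((univ.filter fun k => κ k = i).card).choose (mm i) := by
  classical
  rw [Finset.card_eq_sum_card_fiberwise (f := prof κ)
    (t := Fintype.piFinset fun i : Fin 4 => Finset.range ((univ.filter fun k => κ k = i).card + 1))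
    (fun y _ => by
      rw [Finset.mem_coe, Fintype.mem_piFinset]
      intro i
      rw [Finset.mem_range]
      have hle : prof κ y i ≤ (univ.filter fun k => κ k = i).card :=
        Finset.card_le_card (fun k hk => mem_filter.2 ⟨mem_univ _, (mem_filter.1 hk).2.1⟩)
      omega)]
  rw [Finset.sum_filter]
  refine Finset.sum_congr rfl fun mm _ => ?_
  by_cases hPm : P mm
  · rw [if_pos hPm, ← card_profile κ mm]
    rw [Finset.filter_filter]
    congr 1
    refine Finset.filter_congr fun y _ => ?_
    constructor
    · exact fun h => h.2
    · intro h
      refine ⟨(hQP y).2 ?_, h⟩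
      rw [h]; exact hPm
  · rw [if_neg hPm]
    rw [Finset.card_eq_zero, Finset.filter_eq_empty_iff]
    intro y hy
    intro h
    exact hPm (by rw [← h]; exact (hQP y).1 (mem_filter.1 hy).2)


private lemma hd_split {N : ℕ} (κ : Fin N → Fin 4) (u y : Fin N → ZMod 2) :
    hammingDist u y = ∑ i : Fin 4, (univ.filter fun k => κ k = i ∧ u k ≠ y k).card := by
  show (univ.filter fun k => u k ≠ y k).card = _
  rw [Finset.card_eq_sum_card_fiberwise (f := κ) (t := univ) (fun x _ => mem_univ _)]
  refine Finset.sum_congr rfl fun i _ => ?_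
  rw [Finset.filter_filter]
  congr 1
  ext k
  simp [and_comm]

private lemma fiber_ne_zero {N : ℕ} (κ : Fin N → Fin 4) (u y : Fin N → ZMod 2) (i : Fin 4)
    (hu : ∀ k, κ k = i → u k = 0) :
    (univ.filter fun k => κ k = i ∧ u k ≠ y k).card
      = (univ.filter fun k => κ k = i ∧ y k = 1).card := by
  congr 1
  refine Finset.filter_congr fun k _ => ?_
  by_cases hk : κ k = i
  · rw [hu k hk]
    rcases zmod2_em (y k) with h | h <;> rw [h] <;> simp [hk] <;> decide
  · simp [hk]

private lemma fiber_ne_one {N : ℕ} (κ : Fin N → Fin 4) (u y : Fin N → ZMod 2) (i : Fin 4)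
    (hu : ∀ k, κ k = i → u k = 1) :
    (univ.filter fun k => κ k = i ∧ u k ≠ y k).card
      = (univ.filter fun k => κ k = i).card - (univ.filter fun k => κ k = i ∧ y k = 1).card := by
  have h1 : (univ.filter fun k => κ k = i ∧ u k ≠ y k)
      = (univ.filter fun k => κ k = i ∧ ¬ (y k = 1)) := by
    refine Finset.filter_congr fun k _ => ?_
    by_cases hk : κ k = i
    · rw [hu k hk]
      rcases zmod2_em (y k) with h | h <;> rw [h] <;> simp [hk] <;> decide
    · simp [hk]
  have h2 := Finset.card_filter_add_card_filter_not
    (s := univ.filter fun k => κ k = i) (p := fun k => y k = 1)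
  rw [Finset.filter_filter, Finset.filter_filter] at h2
  rw [h1]
  omega

private lemma fin4_cases (P : Fin 4 → Prop) : (∃ i, P i) ↔ P 0 ∨ P 1 ∨ P 2 ∨ P 3 := by
  constructor
  · rintro ⟨i, h⟩; fin_cases i <;> tauto
  · rintro (h|h|h|h) <;> exact ⟨_, h⟩

private lemma card_filter_mono {X : Type*} [Fintype X] (p q : X → Prop)
    [DecidablePred p] [DecidablePred q]
    (h : (univ.filter fun x => p x ∧ ¬ q x).card ≤ (univ.filter fun x => q x ∧ ¬ p x).card) :
    (univ.filter p).card ≤ (univ.filter q).card := by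
  have hp := Finset.card_filter_add_card_filter_not (s := univ.filter p) (p := q)
  have hq := Finset.card_filter_add_card_filter_not (s := univ.filter q) (p := p)
  rw [Finset.filter_filter, Finset.filter_filter] at hp hq
  have e : (univ.filter fun x => p x ∧ q x).card = (univ.filter fun x => q x ∧ p x).card := by
    congr 1; ext x; simp [and_comm]
  omega

private lemma sum_layer {X : Type*} [Fintype X] [DecidableEq X] (g g' : X → ℕ) (n : ℕ) (f : ℕ → ℝ)
    (hgle : ∀ x, g x ≤ n) (hgle' : ∀ x, g' x ≤ n)
    (hf : ∀ t, f (t+1) ≤ f t)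
    (hcard : ∀ t, (univ.filter fun x => g x ≤ t).card ≤ (univ.filter fun x => g' x ≤ t).card) :
    ∑ x : X, f (g x) ≤ ∑ x : X, f (g' x) := by
  classical
  have key : ∀ (G : X → ℕ), (∀ x, G x ≤ n) → ∑ x : X, f (G x)
      = (Fintype.card X : ℝ) * f n
        + ∑ t ∈ Finset.range n, ((univ.filter fun x => G x ≤ t).card : ℝ) * (f t - f (t+1)) := by
    intro G hG
    have h1 : ∀ x : X, f (G x) = f n + ∑ t ∈ Finset.range n, (if G x ≤ t then f t - f (t+1) else 0) := by
      intro x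
      have h2 : ∑ t ∈ Finset.range n, (if G x ≤ t then f t - f (t+1) else 0)
          = ∑ t ∈ Finset.Ico (G x) n, (f t - f (t+1)) := by
        rw [← Finset.sum_filter]
        congr 1
        ext t
        simp only [Finset.mem_filter, Finset.mem_range, Finset.mem_Ico]
        tauto
      rw [h2, Finset.sum_Ico_eq_sub _ (hG x), Finset.sum_range_sub' f, Finset.sum_range_sub' f]
      ring
    rw [Finset.sum_congr rfl (fun x _ => h1 x), Finset.sum_add_distrib, Finset.sum_const,
      Finset.card_univ, nsmul_eq_mul, Finset.sum_comm]
    congr 1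
    refine Finset.sum_congr rfl fun t _ => ?_
    rw [← Finset.sum_filter, Finset.sum_const, nsmul_eq_mul]
  rw [key g hgle, key g' hgle']
  refine add_le_add le_rfl (Finset.sum_le_sum fun t _ => ?_)
  have : f (t+1) ≤ f t := hf t
  have hc := hcard t
  apply mul_le_mul_of_nonneg_right _ (by linarith)
  exact_mod_cast hc



private lemma dmin_le_n {m : ℕ} (C : Fin 4 → Fin m → ZMod 2) (y : Fin m → ZMod 2) :
    dmin C y ≤ m := by
  refine le_trans (Finset.inf'_le _ (mem_univ 0)) ?_
  have := hammingDist_le_card_fintype (x := C 0) (y := y)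
  simpa using this

private lemma dmin_le_iff {m : ℕ} (C : Fin 4 → Fin m → ZMod 2) (y : Fin m → ZMod 2) (t : ℕ) :
    dmin C y ≤ t ↔ (hammingDist (C 0) y ≤ t ∨ hammingDist (C 1) y ≤ t ∨
      hammingDist (C 2) y ≤ t ∨ hammingDist (C 3) y ≤ t) := by
  show ((Finset.univ : Finset (Fin 4)).inf' Finset.univ_nonempty (fun i => hammingDist (C i) y)) ≤ t ↔ _
  rw [Finset.inf'_le_iff]
  constructor
  · rintro ⟨i, -, h⟩
    fin_cases i
    exacts [Or.inl h, Or.inr (Or.inl h), Or.inr (Or.inr (Or.inl h)), Or.inr (Or.inr (Or.inr h))]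
  · rintro (h|h|h|h)
    exacts [⟨0, mem_univ _, h⟩, ⟨1, mem_univ _, h⟩, ⟨2, mem_univ _, h⟩, ⟨3, mem_univ _, h⟩]

private lemma lam_eq {m : ℕ} (C : Fin 4 → Fin m → ZMod 2) (ε : ℝ) :
    lam C ε = (1/4) * ∑ y : Fin m → ZMod 2, (1-ε)^(m - dmin C y) * ε^(dmin C y) := by
  rw [lam]
  congr 1
  rw [← Finset.sum_fiberwise_of_maps_to (g := dmin C) (t := Finset.range (m+1))
      (fun y _ => Finset.mem_range.2 (Nat.lt_succ_of_le (dmin_le_n C y)))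
      (fun y => (1-ε)^(m - dmin C y) * ε^(dmin C y))]
  refine Finset.sum_congr rfl fun d _ => ?_
  have hcg : ∀ y ∈ Finset.univ.filter (fun y : Fin m → ZMod 2 => dmin C y = d),
      (1-ε)^(m - dmin C y) * ε^(dmin C y) = (1-ε)^(m-d) * ε^d := by
    intro y hy; rw [(Finset.mem_filter.1 hy).2]
  rw [Finset.sum_congr rfl hcg, Finset.sum_const, nsmul_eq_mul, alpha]
  ring



private lemma fin4_all (i : Fin 4) : i = 0 ∨ i = 1 ∨ i = 2 ∨ i = 3 := by
  fin_cases i <;> simp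

private lemma fin4_funext {f g : Fin 4 → ℕ} (h0 : f 0 = g 0) (h1 : f 1 = g 1)
    (h2 : f 2 = g 2) (h3 : f 3 = g 3) : f = g := by
  funext i
  rcases fin4_all i with rfl | rfl | rfl | rfl <;> assumption

private lemma final_sum_le (F : Fin 4 → ℕ) (A B Cc t δ : ℕ)
    (hF0 : F 0 = 1) (hFA : F 1 = A) (hFB : F 2 = B) (hFC : F 3 = Cc)
    (hδ : Cc = A + 2 * δ) :
    (∑ mm ∈ (Fintype.piFinset fun i : Fin 4 => Finset.range (F i + 1)).filter
        (fun mm : Fin 4 → ℕ =>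
          ((mm 0 + mm 1 + mm 2 + mm 3 ≤ t ∨
            mm 0 + mm 1 + (B - mm 2) + (Cc - mm 3) ≤ t ∨
            mm 0 + (A - mm 1) + mm 2 + (Cc - mm 3) ≤ t ∨
            (1 - mm 0) + (A - mm 1) + (B - mm 2) + mm 3 ≤ t) ∧
           ¬(mm 0 + mm 1 + mm 2 + mm 3 ≤ t ∨
            mm 0 + mm 1 + (B - mm 2) + (Cc - mm 3) ≤ t ∨
            (1 - mm 0) + (A - mm 1) + mm 2 + (Cc - mm 3) ≤ t ∨
            (1 - mm 0) + (A - mm 1) + (B - mm 2) + mm 3 ≤ t))),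
        ∏ i : Fin 4, (F i).choose (mm i))
    ≤ ∑ mm ∈ (Fintype.piFinset fun i : Fin 4 => Finset.range (F i + 1)).filter
        (fun mm : Fin 4 → ℕ =>
          ((mm 0 + mm 1 + mm 2 + mm 3 ≤ t ∨
            mm 0 + mm 1 + (B - mm 2) + (Cc - mm 3) ≤ t ∨
            (1 - mm 0) + (A - mm 1) + mm 2 + (Cc - mm 3) ≤ t ∨
            (1 - mm 0) + (A - mm 1) + (B - mm 2) + mm 3 ≤ t) ∧
           ¬(mm 0 + mm 1 + mm 2 + mm 3 ≤ t ∨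
            mm 0 + mm 1 + (B - mm 2) + (Cc - mm 3) ≤ t ∨
            mm 0 + (A - mm 1) + mm 2 + (Cc - mm 3) ≤ t ∨
            (1 - mm 0) + (A - mm 1) + (B - mm 2) + mm 3 ≤ t))),
        ∏ i : Fin 4, (F i).choose (mm i) := by
  classical
  obtain ⟨T, hT⟩ : ∃ T' : (Fin 4 → ℕ) → (Fin 4 → ℕ), T' = (fun mm =>
      if t + 1 ≤ (A - mm 1) + (B - mm 2) + mm 3 then Function.update mm 0 1
      else ![1, mm 3 - δ, mm 2, mm 1 + δ]) := ⟨_, rfl⟩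
  have hmem : ∀ mm : Fin 4 → ℕ,
      mm ∈ (Fintype.piFinset fun i : Fin 4 => Finset.range (F i + 1)) ↔
      (mm 0 ≤ 1 ∧ mm 1 ≤ A ∧ mm 2 ≤ B ∧ mm 3 ≤ Cc) := by
    intro mm
    rw [Fintype.mem_piFinset]
    constructor
    · intro h
      have h0 := h 0; have h1 := h 1; have h2 := h 2; have h3 := h 3
      rw [Finset.mem_range, hF0] at h0
      rw [Finset.mem_range, hFA] at h1
      rw [Finset.mem_range, hFB] at h2
      rw [Finset.mem_range, hFC] at h3
      omega
    · rintro ⟨h0, h1, h2, h3⟩ i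
      rw [Finset.mem_range]
      rcases fin4_all i with rfl | rfl | rfl | rfl
      · rw [hF0]; omega
      · rw [hFA]; omega
      · rw [hFB]; omega
      · rw [hFC]; omega
  have hTc1 : ∀ mm : Fin 4 → ℕ, t + 1 ≤ (A - mm 1) + (B - mm 2) + mm 3 →
      T mm 0 = 1 ∧ T mm 1 = mm 1 ∧ T mm 2 = mm 2 ∧ T mm 3 = mm 3 := by
    intro mm hc
    rw [hT]
    simp only [if_pos hc]
    refine ⟨Function.update_self _ _ _, ?_, ?_, ?_⟩ <;>
      exact Function.update_of_ne (by decide) _ _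
  have hTc2 : ∀ mm : Fin 4 → ℕ, ¬ (t + 1 ≤ (A - mm 1) + (B - mm 2) + mm 3) →
      T mm 0 = 1 ∧ T mm 1 = mm 3 - δ ∧ T mm 2 = mm 2 ∧ T mm 3 = mm 1 + δ := by
    intro mm hc
    rw [hT]
    simp only [if_neg hc]
    exact ⟨rfl, rfl, rfl, rfl⟩
  have main : ∀ s1 s2 : Finset (Fin 4 → ℕ),
      (∀ mm ∈ s1, (mm 0 ≤ 1 ∧ mm 1 ≤ A ∧ mm 2 ≤ B ∧ mm 3 ≤ Cc) ∧
        ((mm 0 + mm 1 + mm 2 + mm 3 ≤ t ∨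
          mm 0 + mm 1 + (B - mm 2) + (Cc - mm 3) ≤ t ∨
          mm 0 + (A - mm 1) + mm 2 + (Cc - mm 3) ≤ t ∨
          (1 - mm 0) + (A - mm 1) + (B - mm 2) + mm 3 ≤ t) ∧
         ¬(mm 0 + mm 1 + mm 2 + mm 3 ≤ t ∨
          mm 0 + mm 1 + (B - mm 2) + (Cc - mm 3) ≤ t ∨
          (1 - mm 0) + (A - mm 1) + mm 2 + (Cc - mm 3) ≤ t ∨
          (1 - mm 0) + (A - mm 1) + (B - mm 2) + mm 3 ≤ t))) →
      (∀ mm : Fin 4 → ℕ, ((mm 0 ≤ 1 ∧ mm 1 ≤ A ∧ mm 2 ≤ B ∧ mm 3 ≤ Cc) ∧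
        ((mm 0 + mm 1 + mm 2 + mm 3 ≤ t ∨
          mm 0 + mm 1 + (B - mm 2) + (Cc - mm 3) ≤ t ∨
          (1 - mm 0) + (A - mm 1) + mm 2 + (Cc - mm 3) ≤ t ∨
          (1 - mm 0) + (A - mm 1) + (B - mm 2) + mm 3 ≤ t) ∧
         ¬(mm 0 + mm 1 + mm 2 + mm 3 ≤ t ∨
          mm 0 + mm 1 + (B - mm 2) + (Cc - mm 3) ≤ t ∨
          mm 0 + (A - mm 1) + mm 2 + (Cc - mm 3) ≤ t ∨
          (1 - mm 0) + (A - mm 1) + (B - mm 2) + mm 3 ≤ t))) → mm ∈ s2) →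
      (∑ mm ∈ s1, ∏ i : Fin 4, (F i).choose (mm i))
        ≤ ∑ mm ∈ s2, ∏ i : Fin 4, (F i).choose (mm i) := by
    intro s1 s2 hs1 hs2
    have hptw : ∀ mm ∈ s1, (∏ i : Fin 4, (F i).choose (mm i))
        ≤ ∏ i : Fin 4, (F i).choose (T mm i) := by
      intro mm hmm
      obtain ⟨⟨hb0, hb1, hb2, hb3⟩, hPB⟩ := hs1 mm hmm
      have hm0 : mm 0 = 0 := by omega
      rw [Fin.prod_univ_four, Fin.prod_univ_four, hF0, hFA, hFB, hFC]
      by_cases hc : t + 1 ≤ (A - mm 1) + (B - mm 2) + mm 3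
      · obtain ⟨a0, a1, a2, a3⟩ := hTc1 mm hc
        rw [a0, a1, a2, a3, hm0]
        simp only [Nat.choose_zero_right, Nat.choose_self]
        exact le_rfl
      · obtain ⟨a0, a1, a2, a3⟩ := hTc2 mm hc
        rw [a0, a1, a2, a3, hm0]
        simp only [Nat.choose_zero_right, Nat.choose_self, one_mul]
        have hkey := choose_ineq A δ (A - mm 1) (mm 3 - δ) (by omega) (by omega)
        rw [Nat.choose_symm hb1] at hkey
        rw [show mm 3 - δ + δ = mm 3 by omega] at hkey
        rw [← hδ] at hkey
        rw [show A - mm 1 + δ = Cc - (mm 1 + δ) by omega] at hkey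
        rw [Nat.choose_symm (show mm 1 + δ ≤ Cc by omega)] at hkey
        calc A.choose (mm 1) * B.choose (mm 2) * Cc.choose (mm 3)
            = A.choose (mm 1) * Cc.choose (mm 3) * B.choose (mm 2) := by ring
          _ ≤ A.choose (mm 3 - δ) * Cc.choose (mm 1 + δ) * B.choose (mm 2) :=
              Nat.mul_le_mul_right _ hkey
          _ = A.choose (mm 3 - δ) * B.choose (mm 2) * Cc.choose (mm 1 + δ) := by ring
    have hinj : ∀ mm ∈ s1, ∀ mm' ∈ s1, T mm = T mm' → mm = mm' := by
      intro mm hmm mm' hmm' heq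
      obtain ⟨⟨hb0, hb1, hb2, hb3⟩, hPB⟩ := hs1 mm hmm
      obtain ⟨⟨hb0', hb1', hb2', hb3'⟩, hPB'⟩ := hs1 mm' hmm'
      have hm0 : mm 0 = 0 := by omega
      have hm0' : mm' 0 = 0 := by omega
      have q1 := congrFun heq 1
      have q2 := congrFun heq 2
      have q3 := congrFun heq 3
      by_cases hc : t + 1 ≤ (A - mm 1) + (B - mm 2) + mm 3 <;>
        by_cases hc' : t + 1 ≤ (A - mm' 1) + (B - mm' 2) + mm' 3
      · obtain ⟨a0, a1, a2, a3⟩ := hTc1 mm hc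
        obtain ⟨b0, b1, b2, b3⟩ := hTc1 mm' hc'
        rw [a1, b1] at q1; rw [a2, b2] at q2; rw [a3, b3] at q3
        exact fin4_funext (by omega) q1 q2 q3
      · obtain ⟨a0, a1, a2, a3⟩ := hTc1 mm hc
        obtain ⟨b0, b1, b2, b3⟩ := hTc2 mm' hc'
        rw [a1, b1] at q1; rw [a2, b2] at q2; rw [a3, b3] at q3
        exact absurd rfl (by omega : ¬ (0:ℕ) = 0)
      · obtain ⟨a0, a1, a2, a3⟩ := hTc2 mm hc
        obtain ⟨b0, b1, b2, b3⟩ := hTc1 mm' hc'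
        rw [a1, b1] at q1; rw [a2, b2] at q2; rw [a3, b3] at q3
        exact absurd rfl (by omega : ¬ (0:ℕ) = 0)
      · obtain ⟨a0, a1, a2, a3⟩ := hTc2 mm hc
        obtain ⟨b0, b1, b2, b3⟩ := hTc2 mm' hc'
        rw [a1, b1] at q1; rw [a2, b2] at q2; rw [a3, b3] at q3
        exact fin4_funext (by omega) (by omega) q2 (by omega)
    have himg : ∀ mm ∈ s1, T mm ∈ s2 := by
      intro mm hmm
      obtain ⟨⟨hb0, hb1, hb2, hb3⟩, hPB⟩ := hs1 mm hmm
      have hm0 : mm 0 = 0 := by omega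
      apply hs2
      by_cases hc : t + 1 ≤ (A - mm 1) + (B - mm 2) + mm 3
      · obtain ⟨a0, a1, a2, a3⟩ := hTc1 mm hc
        rw [a0, a1, a2, a3]
        omega
      · obtain ⟨a0, a1, a2, a3⟩ := hTc2 mm hc
        rw [a0, a1, a2, a3]
        omega
    calc (∑ mm ∈ s1, ∏ i : Fin 4, (F i).choose (mm i))
        ≤ ∑ mm ∈ s1, ∏ i : Fin 4, (F i).choose (T mm i) := Finset.sum_le_sum hptw
      _ = ∑ mm ∈ s1.image T, ∏ i : Fin 4, (F i).choose (mm i) := (Finset.sum_image (f := fun mm => ∏ i : Fin 4, (F i).choose (mm i)) (g := T) hinj).symm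
      _ ≤ ∑ mm ∈ s2, ∏ i : Fin 4, (F i).choose (mm i) := by
          refine Finset.sum_le_sum_of_subset fun x hx => ?_
          rw [Finset.mem_image] at hx
          obtain ⟨mm, hmm, rfl⟩ := hx
          exact himg mm hmm
  refine main _ _ ?_ ?_
  · intro mm hmm
    rw [Finset.mem_filter] at hmm
    exact ⟨(hmem mm).1 hmm.1, hmm.2⟩
  · intro mm h
    exact Finset.mem_filter.2 ⟨(hmem mm).2 h.1, h.2⟩


/-- Theorem 4 of the paper (case `|3| ≤ |5| ≤ |6|`): for a Class-I code with
`|1| = 1`, replacing the unique `[0,0,0,1]ᵀ` column by `[0,0,1,1]ᵀ` does not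
decrease λ, and the resulting code is linear. -/
theorem stmt11 (n : ℕ) (C C' : Fin 4 → Fin n → ZMod 2)
    (hcols : ∀ k : Fin n, (fun i => C i k) = pat 1 ∨ (fun i => C i k) = pat 3 ∨
      (fun i => C i k) = pat 5 ∨ (fun i => C i k) = pat 6)
    (h1 : colCount C (pat 1) = 1)
    (hord35 : colCount C (pat 3) ≤ colCount C (pat 5))
    (hord56 : colCount C (pat 5) ≤ colCount C (pat 6))
    (hpar35 : colCount C (pat 3) % 2 = colCount C (pat 5) % 2)
    (hpar56 : colCount C (pat 5) % 2 = colCount C (pat 6) % 2)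
    (j0 : Fin n) (hj0 : (fun i => C i j0) = pat 1)
    (hC' : C' = fun i j => if j = j0 then pat 3 i else C i j) :
    (∀ ε : ℝ, 0 < ε → ε < 1/2 → lam C ε ≤ lam C' ε) ∧ IsLinearCode C' := by
  -- main proof
  classical
  -- the column classifier
  obtain ⟨κ, hκdef⟩ : ∃ κ' : Fin n → Fin 4, κ' = (fun k =>
      if k = j0 then 0 else if (fun i => C i k) = pat 3 then 1
      else if (fun i => C i k) = pat 5 then 2 else 3) := ⟨_, rfl⟩
  have hκj0 : κ j0 = 0 := by rw [hκdef]; simp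
  have hno1 : ∀ k, k ≠ j0 → ¬ ((fun i => C i k) = pat 1) := by
    intro k hk hcol
    have hsub : ({j0, k} : Finset (Fin n)) ⊆ univ.filter (fun k => (fun i => C i k) = pat 1) := by
      intro x hx
      rcases Finset.mem_insert.1 hx with rfl | hx
      · exact mem_filter.2 ⟨mem_univ _, hj0⟩
      · rw [Finset.mem_singleton] at hx; subst hx
        exact mem_filter.2 ⟨mem_univ _, hcol⟩
    have h2 : ({j0, k} : Finset (Fin n)).card = 2 := Finset.card_pair (Ne.symm hk)
    have h3 := Finset.card_le_card hsub
    rw [h2] at h3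
    rw [colCount] at h1
    omega
  have hκ0 : ∀ k, κ k = 0 ↔ k = j0 := by
    intro k
    constructor
    · intro h
      by_contra hk
      rw [hκdef] at h
      simp only [if_neg hk] at h
      split_ifs at h <;> exact absurd h (by decide)
    · intro h; subst h; exact hκj0
  have hκ1 : ∀ k, κ k = 1 ↔ (fun i => C i k) = pat 3 := by
    intro k
    constructor
    · intro h
      by_cases hk : k = j0
      · subst hk; rw [hκj0] at h; exact absurd h (by decide)
      · rw [hκdef] at h
        simp only [if_neg hk] at h
        split_ifs at h with h3 h5
        · exact h3
        · exact absurd h (by decide)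
        · exact absurd h (by decide)
    · intro hcol
      have hk : k ≠ j0 := by
        intro e; subst e; rw [hj0] at hcol; exact absurd hcol (by decide)
      rw [hκdef]
      simp only [if_neg hk, if_pos hcol]
  have hκ2 : ∀ k, κ k = 2 ↔ (fun i => C i k) = pat 5 := by
    intro k
    constructor
    · intro h
      by_cases hk : k = j0
      · subst hk; rw [hκj0] at h; exact absurd h (by decide)
      · rw [hκdef] at h
        simp only [if_neg hk] at h
        split_ifs at h with h3 h5
        · exact absurd h (by decide)
        · exact h5
        · exact absurd h (by decide)
    · intro hcol
      have hk : k ≠ j0 := by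
        intro e; subst e; rw [hj0] at hcol; exact absurd hcol (by decide)
      have h3 : ¬ ((fun i => C i k) = pat 3) := by rw [hcol]; decide
      rw [hκdef]
      simp only [if_neg hk, if_neg h3, if_pos hcol]
  have hκ3 : ∀ k, κ k = 3 ↔ (fun i => C i k) = pat 6 := by
    intro k
    constructor
    · intro h
      by_cases hk : k = j0
      · subst hk; rw [hκj0] at h; exact absurd h (by decide)
      · rw [hκdef] at h
        simp only [if_neg hk] at h
        split_ifs at h with h3 h5
        · exact absurd h (by decide)
        · exact absurd h (by decide)
        · rcases hcols k with h' | h' | h' | h'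
          · exact absurd h' (hno1 k hk)
          · exact absurd h' h3
          · exact absurd h' h5
          · exact h'
    · intro hcol
      have hk : k ≠ j0 := by
        intro e; subst e; rw [hj0] at hcol; exact absurd hcol (by decide)
      have h3 : ¬ ((fun i => C i k) = pat 3) := by rw [hcol]; decide
      have h5 : ¬ ((fun i => C i k) = pat 5) := by rw [hcol]; decide
      rw [hκdef]
      simp only [if_neg hk, if_neg h3, if_neg h5]
  -- column values
  have hCv0 : ∀ k, κ k = 0 → ∀ r, C r k = pat 1 r := by
    intro k hk r
    rw [(hκ0 k).1 hk]
    exact congrFun hj0 r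
  have hCv1 : ∀ k, κ k = 1 → ∀ r, C r k = pat 3 r := fun k hk r => congrFun ((hκ1 k).1 hk) r
  have hCv2 : ∀ k, κ k = 2 → ∀ r, C r k = pat 5 r := fun k hk r => congrFun ((hκ2 k).1 hk) r
  have hCv3 : ∀ k, κ k = 3 → ∀ r, C r k = pat 6 r := fun k hk r => congrFun ((hκ3 k).1 hk) r
  have hC'v : ∀ r k, C' r k = if k = j0 then pat 3 r else C r k := by
    intro r k; rw [hC']
  have hkne : ∀ k (i : Fin 4), κ k = i → i ≠ 0 → k ≠ j0 := by
    intro k i hk hi e; subst e; rw [hκj0] at hk; exact hi hk.symm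
  have hC'v0 : ∀ k, κ k = 0 → ∀ r, C' r k = pat 3 r := by
    intro k hk r; rw [hC'v, if_pos ((hκ0 k).1 hk)]
  have hC'v1 : ∀ k, κ k = 1 → ∀ r, C' r k = pat 3 r := by
    intro k hk r; rw [hC'v, if_neg (hkne k 1 hk (by decide))]; exact hCv1 k hk r
  have hC'v2 : ∀ k, κ k = 2 → ∀ r, C' r k = pat 5 r := by
    intro k hk r; rw [hC'v, if_neg (hkne k 2 hk (by decide))]; exact hCv2 k hk r
  have hC'v3 : ∀ k, κ k = 3 → ∀ r, C' r k = pat 6 r := by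
    intro k hk r; rw [hC'v, if_neg (hkne k 3 hk (by decide))]; exact hCv3 k hk r
  -- fiber cardinalities
  have hF0 : (univ.filter fun k : Fin n => κ k = 0).card = 1 := by
    have he : (univ.filter fun k : Fin n => κ k = 0) = {j0} := by
      ext k
      simp only [mem_filter, mem_univ, true_and, Finset.mem_singleton]
      exact hκ0 k
    rw [he, Finset.card_singleton]
  obtain ⟨A, hA⟩ : ∃ x, (univ.filter fun k : Fin n => κ k = 1).card = x := ⟨_, rfl⟩
  obtain ⟨B, hB⟩ : ∃ x, (univ.filter fun k : Fin n => κ k = 2).card = x := ⟨_, rfl⟩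
  obtain ⟨Cc, hCc⟩ : ∃ x, (univ.filter fun k : Fin n => κ k = 3).card = x := ⟨_, rfl⟩
  have hccA : colCount C (pat 3) = A := by
    rw [colCount, ← hA]
    congr 1
    ext k
    simp only [mem_filter, mem_univ, true_and]
    exact (hκ1 k).symm
  have hccB : colCount C (pat 5) = B := by
    rw [colCount, ← hB]
    congr 1
    ext k
    simp only [mem_filter, mem_univ, true_and]
    exact (hκ2 k).symm
  have hccC : colCount C (pat 6) = Cc := by
    rw [colCount, ← hCc]
    congr 1
    ext k
    simp only [mem_filter, mem_univ, true_and]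
    exact (hκ3 k).symm
  rw [hccA, hccB] at hord35 hpar35
  rw [hccB, hccC] at hord56 hpar56
  obtain ⟨δ, hδ⟩ : ∃ δ, Cc = A + 2 * δ := ⟨(Cc - A)/2, by omega⟩
  -- row distances in terms of profiles
  have hd0 : ∀ y : Fin n → ZMod 2, hammingDist (C 0) y
      = prof κ y 0 + prof κ y 1 + prof κ y 2 + prof κ y 3 := by
    intro y
    rw [hd_split κ (C 0) y, Fin.sum_univ_four,
      fiber_ne_zero κ _ y 0 (fun k hk => by rw [hCv0 k hk 0]; decide),
      fiber_ne_zero κ _ y 1 (fun k hk => by rw [hCv1 k hk 0]; decide),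
      fiber_ne_zero κ _ y 2 (fun k hk => by rw [hCv2 k hk 0]; decide),
      fiber_ne_zero κ _ y 3 (fun k hk => by rw [hCv3 k hk 0]; decide)]
    rfl
  have hd1 : ∀ y : Fin n → ZMod 2, hammingDist (C 1) y
      = prof κ y 0 + prof κ y 1 + (B - prof κ y 2) + (Cc - prof κ y 3) := by
    intro y
    rw [hd_split κ (C 1) y, Fin.sum_univ_four,
      fiber_ne_zero κ _ y 0 (fun k hk => by rw [hCv0 k hk 1]; decide),
      fiber_ne_zero κ _ y 1 (fun k hk => by rw [hCv1 k hk 1]; decide),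
      fiber_ne_one κ _ y 2 (fun k hk => by rw [hCv2 k hk 1]; decide),
      fiber_ne_one κ _ y 3 (fun k hk => by rw [hCv3 k hk 1]; decide),
      hB, hCc]
    rfl
  have hd2 : ∀ y : Fin n → ZMod 2, hammingDist (C 2) y
      = prof κ y 0 + (A - prof κ y 1) + prof κ y 2 + (Cc - prof κ y 3) := by
    intro y
    rw [hd_split κ (C 2) y, Fin.sum_univ_four,
      fiber_ne_zero κ _ y 0 (fun k hk => by rw [hCv0 k hk 2]; decide),
      fiber_ne_one κ _ y 1 (fun k hk => by rw [hCv1 k hk 2]; decide),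
      fiber_ne_zero κ _ y 2 (fun k hk => by rw [hCv2 k hk 2]; decide),
      fiber_ne_one κ _ y 3 (fun k hk => by rw [hCv3 k hk 2]; decide),
      hA, hCc]
    rfl
  have hd3 : ∀ y : Fin n → ZMod 2, hammingDist (C 3) y
      = (1 - prof κ y 0) + (A - prof κ y 1) + (B - prof κ y 2) + prof κ y 3 := by
    intro y
    rw [hd_split κ (C 3) y, Fin.sum_univ_four,
      fiber_ne_one κ _ y 0 (fun k hk => by rw [hCv0 k hk 3]; decide),
      fiber_ne_one κ _ y 1 (fun k hk => by rw [hCv1 k hk 3]; decide),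
      fiber_ne_one κ _ y 2 (fun k hk => by rw [hCv2 k hk 3]; decide),
      fiber_ne_zero κ _ y 3 (fun k hk => by rw [hCv3 k hk 3]; decide),
      hF0, hA, hB]
    rfl
  have hd0' : ∀ y : Fin n → ZMod 2, hammingDist (C' 0) y
      = prof κ y 0 + prof κ y 1 + prof κ y 2 + prof κ y 3 := by
    intro y
    rw [hd_split κ (C' 0) y, Fin.sum_univ_four,
      fiber_ne_zero κ _ y 0 (fun k hk => by rw [hC'v0 k hk 0]; decide),
      fiber_ne_zero κ _ y 1 (fun k hk => by rw [hC'v1 k hk 0]; decide),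
      fiber_ne_zero κ _ y 2 (fun k hk => by rw [hC'v2 k hk 0]; decide),
      fiber_ne_zero κ _ y 3 (fun k hk => by rw [hC'v3 k hk 0]; decide)]
    rfl
  have hd1' : ∀ y : Fin n → ZMod 2, hammingDist (C' 1) y
      = prof κ y 0 + prof κ y 1 + (B - prof κ y 2) + (Cc - prof κ y 3) := by
    intro y
    rw [hd_split κ (C' 1) y, Fin.sum_univ_four,
      fiber_ne_zero κ _ y 0 (fun k hk => by rw [hC'v0 k hk 1]; decide),
      fiber_ne_zero κ _ y 1 (fun k hk => by rw [hC'v1 k hk 1]; decide),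
      fiber_ne_one κ _ y 2 (fun k hk => by rw [hC'v2 k hk 1]; decide),
      fiber_ne_one κ _ y 3 (fun k hk => by rw [hC'v3 k hk 1]; decide),
      hB, hCc]
    rfl
  have hd2' : ∀ y : Fin n → ZMod 2, hammingDist (C' 2) y
      = (1 - prof κ y 0) + (A - prof κ y 1) + prof κ y 2 + (Cc - prof κ y 3) := by
    intro y
    rw [hd_split κ (C' 2) y, Fin.sum_univ_four,
      fiber_ne_one κ _ y 0 (fun k hk => by rw [hC'v0 k hk 2]; decide),
      fiber_ne_one κ _ y 1 (fun k hk => by rw [hC'v1 k hk 2]; decide),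
      fiber_ne_zero κ _ y 2 (fun k hk => by rw [hC'v2 k hk 2]; decide),
      fiber_ne_one κ _ y 3 (fun k hk => by rw [hC'v3 k hk 2]; decide),
      hF0, hA, hCc]
    rfl
  have hd3' : ∀ y : Fin n → ZMod 2, hammingDist (C' 3) y
      = (1 - prof κ y 0) + (A - prof κ y 1) + (B - prof κ y 2) + prof κ y 3 := by
    intro y
    rw [hd_split κ (C' 3) y, Fin.sum_univ_four,
      fiber_ne_one κ _ y 0 (fun k hk => by rw [hC'v0 k hk 3]; decide),
      fiber_ne_one κ _ y 1 (fun k hk => by rw [hC'v1 k hk 3]; decide),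
      fiber_ne_one κ _ y 2 (fun k hk => by rw [hC'v2 k hk 3]; decide),
      fiber_ne_zero κ _ y 3 (fun k hk => by rw [hC'v3 k hk 3]; decide),
      hF0, hA, hB]
    rfl
  -- dmin characterizations
  have hdmC : ∀ (y : Fin n → ZMod 2) (t : ℕ), dmin C y ≤ t ↔
      (prof κ y 0 + prof κ y 1 + prof κ y 2 + prof κ y 3 ≤ t ∨
       prof κ y 0 + prof κ y 1 + (B - prof κ y 2) + (Cc - prof κ y 3) ≤ t ∨
       prof κ y 0 + (A - prof κ y 1) + prof κ y 2 + (Cc - prof κ y 3) ≤ t ∨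
       (1 - prof κ y 0) + (A - prof κ y 1) + (B - prof κ y 2) + prof κ y 3 ≤ t) := by
    intro y t
    rw [dmin_le_iff C y t, hd0 y, hd1 y, hd2 y, hd3 y]
  have hdmC' : ∀ (y : Fin n → ZMod 2) (t : ℕ), dmin C' y ≤ t ↔
      (prof κ y 0 + prof κ y 1 + prof κ y 2 + prof κ y 3 ≤ t ∨
       prof κ y 0 + prof κ y 1 + (B - prof κ y 2) + (Cc - prof κ y 3) ≤ t ∨
       (1 - prof κ y 0) + (A - prof κ y 1) + prof κ y 2 + (Cc - prof κ y 3) ≤ t ∨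
       (1 - prof κ y 0) + (A - prof κ y 1) + (B - prof κ y 2) + prof κ y 3 ≤ t) := by
    intro y t
    rw [dmin_le_iff C' y t, hd0' y, hd1' y, hd2' y, hd3' y]
  -- threshold counts
  have key : ∀ t : ℕ, (univ.filter fun y : Fin n → ZMod 2 => dmin C y ≤ t).card
      ≤ (univ.filter fun y : Fin n → ZMod 2 => dmin C' y ≤ t).card := by
    intro t
    apply card_filter_mono
    rw [card_filter_prof κ _ (fun mm : Fin 4 → ℕ =>
        ((mm 0 + mm 1 + mm 2 + mm 3 ≤ t ∨
          mm 0 + mm 1 + (B - mm 2) + (Cc - mm 3) ≤ t ∨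
          mm 0 + (A - mm 1) + mm 2 + (Cc - mm 3) ≤ t ∨
          (1 - mm 0) + (A - mm 1) + (B - mm 2) + mm 3 ≤ t) ∧
         ¬(mm 0 + mm 1 + mm 2 + mm 3 ≤ t ∨
          mm 0 + mm 1 + (B - mm 2) + (Cc - mm 3) ≤ t ∨
          (1 - mm 0) + (A - mm 1) + mm 2 + (Cc - mm 3) ≤ t ∨
          (1 - mm 0) + (A - mm 1) + (B - mm 2) + mm 3 ≤ t)))
      (fun y => and_congr (hdmC y t) (not_congr (hdmC' y t)))]
    rw [card_filter_prof κ _ (fun mm : Fin 4 → ℕ =>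
        ((mm 0 + mm 1 + mm 2 + mm 3 ≤ t ∨
          mm 0 + mm 1 + (B - mm 2) + (Cc - mm 3) ≤ t ∨
          (1 - mm 0) + (A - mm 1) + mm 2 + (Cc - mm 3) ≤ t ∨
          (1 - mm 0) + (A - mm 1) + (B - mm 2) + mm 3 ≤ t) ∧
         ¬(mm 0 + mm 1 + mm 2 + mm 3 ≤ t ∨
          mm 0 + mm 1 + (B - mm 2) + (Cc - mm 3) ≤ t ∨
          mm 0 + (A - mm 1) + mm 2 + (Cc - mm 3) ≤ t ∨
          (1 - mm 0) + (A - mm 1) + (B - mm 2) + mm 3 ≤ t)))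
      (fun y => and_congr (hdmC' y t) (not_congr (hdmC y t)))]
    exact final_sum_le (fun i => (univ.filter fun k => κ k = i).card) A B Cc t δ hF0 hA hB hCc hδ
  constructor
  · intro ε hε0 hε12
    rw [lam_eq C ε, lam_eq C' ε]
    refine mul_le_mul_of_nonneg_left ?_ (by norm_num)
    refine sum_layer (fun y => dmin C y) (fun y => dmin C' y) n
      (fun d => (1-ε)^(n-d) * ε^d) (fun y => dmin_le_n C y) (fun y => dmin_le_n C' y) ?_ key
    intro t
    show (1-ε)^(n-(t+1)) * ε^(t+1) ≤ (1-ε)^(n-t) * ε^t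
    have hε1 : (0:ℝ) < 1 - ε := by linarith
    have hεle : ε ≤ 1 - ε := by linarith
    rcases le_or_gt n t with h | h
    · rw [Nat.sub_eq_zero_of_le h, Nat.sub_eq_zero_of_le (by omega : n ≤ t + 1)]
      simp only [pow_zero, one_mul, pow_succ]
      have h1 : (0:ℝ) ≤ ε ^ t := by positivity
      nlinarith
    · have he : n - t = (n - (t+1)) + 1 := by omega
      rw [he, pow_succ]
      have hKP : (0:ℝ) ≤ (1-ε)^(n-(t+1)) * ε^t := by positivity
      have h2 := mul_le_mul_of_nonneg_left hεle hKP
      calc (1-ε)^(n-(t+1)) * ε^(t+1) = (1-ε)^(n-(t+1)) * ε^t * ε := by ring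
        _ ≤ (1-ε)^(n-(t+1)) * ε^t * (1-ε) := h2
        _ = (1-ε)^(n-(t+1)) * (1-ε) * ε^t := by ring
  · -- linearity
    have hcol' : ∀ k, ((fun r => C' r k) = pat 3 ∨ (fun r => C' r k) = pat 5 ∨
        (fun r => C' r k) = pat 6) := by
      intro k
      by_cases hk : k = j0
      · left; funext r; rw [hC'v, if_pos hk]
      · rcases hcols k with h' | h' | h' | h'
        · exact absurd h' (hno1 k hk)
        · left; funext r; rw [hC'v, if_neg hk]; exact congrFun h' r
        · right; left; funext r; rw [hC'v, if_neg hk]; exact congrFun h' r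
        · right; right; funext r; rw [hC'v, if_neg hk]; exact congrFun h' r
    refine ⟨{ carrier := Set.range C', add_mem' := ?_, zero_mem' := ?_, neg_mem' := ?_ }, rfl⟩
    · rintro x y ⟨i, rfl⟩ ⟨i', rfl⟩
      obtain ⟨x4, hx4⟩ : ∃ v : Fin 4,
          v = (![![0,1,2,3],![1,0,3,2],![2,3,0,1],![3,2,1,0]] : Fin 4 → Fin 4 → Fin 4) i i' :=
        ⟨_, rfl⟩
      refine ⟨x4, funext fun k => ?_⟩
      show C' x4 k = C' i k + C' i' k
      subst hx4
      rcases hcol' k with hp | hp | hp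
      · have hv : ∀ r, C' r k = pat 3 r := fun r => congrFun hp r
        simp only [hv]; fin_cases i <;> fin_cases i' <;> decide
      · have hv : ∀ r, C' r k = pat 5 r := fun r => congrFun hp r
        simp only [hv]; fin_cases i <;> fin_cases i' <;> decide
      · have hv : ∀ r, C' r k = pat 6 r := fun r => congrFun hp r
        simp only [hv]; fin_cases i <;> fin_cases i' <;> decide
    · refine ⟨0, funext fun k => ?_⟩
      show C' 0 k = 0
      rcases hcol' k with hp | hp | hp
      · exact (congrFun hp 0).trans (by decide)
      · exact (congrFun hp 0).trans (by decide)
      · exact (congrFun hp 0).trans (by decide)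
    · intro x hx
      have hxx : -x = x := by
        funext k
        show -(x k) = x k
        rcases zmod2_em (x k) with h | h <;> rw [h] <;> decide
      rw [hxx]; exact hx
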